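/- Let ℏ > 0, m ≥ 1, and a ∈ ℂ^m with ∑ a_i² = 1. Then the linear forms ⟨a,u⟩ and ⟨a,v⟩ anticommute with the partial polar element under the ΨDO product: ⟨a,u⟩ *_{K₀} F_a = − F_a *_{K₀} ⟨a,u⟩ and ⟨a,v⟩ *_{K₀} F_a = − F_a *_{K₀} ⟨a,v⟩, where the products with linear factors are the finite sums ⟨a,u⟩ *_{K₀} F_a = ⟨a,u⟩·F_a, F_a *_{K₀} ⟨a,u⟩ = F_a·⟨a,u⟩ + iℏ ∑_j a_j ∂_{v_j}F_a, ⟨a,v⟩ *_{K₀} F_a = ⟨a,v⟩·F_a + iℏ ∑_j a_j ∂_{u_j}F_a, F_a *_{K₀} ⟨a,v⟩ = F_a·⟨a,v⟩. -/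

import Mathlib

/-- Functions on `ℂ^{2m}`, written as functions of `(u, v)` with `u, v : Fin m → ℂ`. -/
abbrev HolFn (m : ℕ) := (Fin m → ℂ) → (Fin m → ℂ) → ℂ

/-- Partial derivative `∂_{u_j}`. -/
noncomputable def pdU (m : ℕ) (j : Fin m) (f : HolFn m) : HolFn m :=
  fun u v => fderiv ℂ (fun w => f w v) u (Pi.single j 1)

/-- Partial derivative `∂_{v_j}`. -/
noncomputable def pdV (m : ℕ) (j : Fin m) (f : HolFn m) : HolFn m :=
  fun u v => fderiv ℂ (fun w => f u w) v (Pi.single j 1)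

/-- Normal ordered expression of the partial polar element `ε₀₀(a)`:
`F_a(u,v) = i·exp(−(2/(iℏ))·⟨a,u⟩⟨a,v⟩)`. -/
noncomputable def polarElt (ℏ : ℝ) (m : ℕ) (a : Fin m → ℂ) : HolFn m :=
  fun u v => Complex.I *
    Complex.exp (-(2 / (Complex.I * ℏ)) * ((∑ i, a i * u i) * (∑ i, a i * v i)))


noncomputable def Lmap (m : ℕ) (a : Fin m → ℂ) : (Fin m → ℂ) →L[ℂ] ℂ :=
  ∑ i, a i • ContinuousLinearMap.proj i

lemma Lmap_apply (m : ℕ) (a : Fin m → ℂ) (w : Fin m → ℂ) :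
    Lmap m a w = ∑ i, a i * w i := by
  simp [Lmap, ContinuousLinearMap.sum_apply, ContinuousLinearMap.proj_apply]

lemma Lmap_single (m : ℕ) (a : Fin m → ℂ) (j : Fin m) :
    Lmap m a (Pi.single j 1) = a j := by
  rw [Lmap_apply]
  simp [Pi.single_apply, mul_ite, Finset.sum_ite_eq']

lemma deriv_exp_lin (m : ℕ) (a : Fin m → ℂ) (k : ℂ) (v : Fin m → ℂ) (j : Fin m) :
    fderiv ℂ (fun w => Complex.I * Complex.exp (k * ∑ i, a i * w i)) v (Pi.single j 1)
      = Complex.I * Complex.exp (k * ∑ i, a i * v i) * (k * a j) := by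
  have hL : HasFDerivAt (fun w => Lmap m a w) (Lmap m a) v := (Lmap m a).hasFDerivAt
  have h1 : HasFDerivAt (fun w => k * Lmap m a w) (k • Lmap m a) v := hL.const_mul k
  have h2 : HasFDerivAt (fun w => Complex.exp (k * Lmap m a w))
      (Complex.exp (k * Lmap m a v) • (k • Lmap m a)) v :=
    (Complex.hasDerivAt_exp (k * Lmap m a v)).comp_hasFDerivAt v h1
  have h3 : HasFDerivAt (fun w => Complex.I * Complex.exp (k * Lmap m a w))
      (Complex.I • (Complex.exp (k * Lmap m a v) • (k • Lmap m a))) v :=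
    h2.const_mul Complex.I
  have heq : (fun w => Complex.I * Complex.exp (k * ∑ i, a i * w i)) =
      (fun w => Complex.I * Complex.exp (k * Lmap m a w)) := by
    funext w; rw [Lmap_apply]
  rw [heq, h3.fderiv]
  have h4 : (Lmap m a) (Pi.single j 1) = a j := Lmap_single m a j
  simp only [ContinuousLinearMap.smul_apply, smul_eq_mul, h4, Lmap_apply]
  ring

theorem statement5 (ℏ : ℝ) (hℏ : 0 < ℏ) (m : ℕ) (hm : 1 ≤ m)
    (a : Fin m → ℂ) (ha : ∑ i, a i ^ 2 = 1) :
    ∀ u v : Fin m → ℂ,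
      -- ⟨a,u⟩ *_{K₀} F_a = − F_a *_{K₀} ⟨a,u⟩
      ((∑ i, a i * u i) * polarElt ℏ m a u v
        = -(polarElt ℏ m a u v * (∑ i, a i * u i) +
            (Complex.I * ℏ) * ∑ j, a j * pdV m j (polarElt ℏ m a) u v)) ∧
      -- ⟨a,v⟩ *_{K₀} F_a = − F_a *_{K₀} ⟨a,v⟩
      ((∑ i, a i * v i) * polarElt ℏ m a u v +
          (Complex.I * ℏ) * ∑ j, a j * pdU m j (polarElt ℏ m a) u v
        = -(polarElt ℏ m a u v * (∑ i, a i * v i))) := by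
  intro u v
  set Au := ∑ i, a i * u i with hAu
  set Av := ∑ i, a i * v i with hAv
  set k : ℂ := -(2 / (Complex.I * ℏ)) with hk
  have hF : polarElt ℏ m a u v = Complex.I * Complex.exp (k * (Au * Av)) := rfl
  have hne : Complex.I * (ℏ:ℂ) ≠ 0 := by
    simp [Complex.I_ne_zero, Complex.ofReal_ne_zero, hℏ.ne']
  have hk2 : (Complex.I * ℏ) * k = -2 := by
    rw [hk]; field_simp; rw [div_self (Complex.ofReal_ne_zero.mpr hℏ.ne')]
  clear_value Au Av k
  have hV : ∀ j, pdV m j (polarElt ℏ m a) u v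
      = polarElt ℏ m a u v * ((k * Au) * a j) := by
    intro j
    have harg : (fun w => polarElt ℏ m a u w)
        = (fun w => Complex.I * Complex.exp ((k * Au) * ∑ i, a i * w i)) := by
      funext w
      simp only [polarElt]
      rw [hk, hAu]
      rw [show -(2 / (Complex.I * (ℏ:ℂ))) * ((∑ i, a i * u i) * ∑ i, a i * w i)
        = (-(2 / (Complex.I * (ℏ:ℂ))) * ∑ i, a i * u i) * ∑ i, a i * w i by ring]
    have h5 : pdV m j (polarElt ℏ m a) u v
        = fderiv ℂ (fun w => Complex.I * Complex.exp ((k * Au) * ∑ i, a i * w i)) v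
            (Pi.single j 1) := by
      simp only [pdV]; rw [harg]
    rw [h5, deriv_exp_lin m a (k * Au) v j, hF, ← hAv]
    rw [show (k * Au) * Av = k * (Au * Av) by ring]
  have hU : ∀ j, pdU m j (polarElt ℏ m a) u v
      = polarElt ℏ m a u v * ((k * Av) * a j) := by
    intro j
    have harg : (fun w => polarElt ℏ m a w v)
        = (fun w => Complex.I * Complex.exp ((k * Av) * ∑ i, a i * w i)) := by
      funext w
      simp only [polarElt]
      rw [hk, hAv]
      rw [show -(2 / (Complex.I * (ℏ:ℂ))) * ((∑ i, a i * w i) * ∑ i, a i * v i)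
        = (-(2 / (Complex.I * (ℏ:ℂ))) * ∑ i, a i * v i) * ∑ i, a i * w i by ring]
    have h5 : pdU m j (polarElt ℏ m a) u v
        = fderiv ℂ (fun w => Complex.I * Complex.exp ((k * Av) * ∑ i, a i * w i)) u
            (Pi.single j 1) := by
      simp only [pdU]; rw [harg]
    rw [h5, deriv_exp_lin m a (k * Av) u j, hF, ← hAu]
    rw [show (k * Av) * Au = k * (Au * Av) by ring]
  have hsumV : ∑ j, a j * pdV m j (polarElt ℏ m a) u v
      = polarElt ℏ m a u v * (k * Au) := by
    calc ∑ j, a j * pdV m j (polarElt ℏ m a) u v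
        = ∑ j, (polarElt ℏ m a u v * (k * Au)) * a j ^ 2 := by
          refine Finset.sum_congr rfl fun j _ => ?_
          rw [hV j]; ring
      _ = (polarElt ℏ m a u v * (k * Au)) * ∑ j, a j ^ 2 := by
          rw [← Finset.mul_sum]
      _ = _ := by rw [ha, mul_one]
  have hsumU : ∑ j, a j * pdU m j (polarElt ℏ m a) u v
      = polarElt ℏ m a u v * (k * Av) := by
    calc ∑ j, a j * pdU m j (polarElt ℏ m a) u v
        = ∑ j, (polarElt ℏ m a u v * (k * Av)) * a j ^ 2 := by
          refine Finset.sum_congr rfl fun j _ => ?_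
          rw [hU j]; ring
      _ = (polarElt ℏ m a u v * (k * Av)) * ∑ j, a j ^ 2 := by
          rw [← Finset.mul_sum]
      _ = _ := by rw [ha, mul_one]
  constructor
  · rw [hsumV]
    have h2 : (Complex.I * ↑ℏ) * (polarElt ℏ m a u v * (k * Au))
        = -2 * Au * polarElt ℏ m a u v := by
      calc (Complex.I * ↑ℏ) * (polarElt ℏ m a u v * (k * Au))
          = ((Complex.I * ↑ℏ) * k) * Au * polarElt ℏ m a u v := by ring
        _ = _ := by rw [hk2]
    rw [h2]; ring
  · rw [hsumU]
    have h2 : (Complex.I * ↑ℏ) * (polarElt ℏ m a u v * (k * Av))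
        = -2 * Av * polarElt ℏ m a u v := by
      calc (Complex.I * ↑ℏ) * (polarElt ℏ m a u v * (k * Av))
          = ((Complex.I * ↑ℏ) * k) * Av * polarElt ℏ m a u v := by ring
        _ = _ := by rw [hk2]
    rw [h2]; ring
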